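/- Let V be a finite-dimensional real vector space and 𝕋V = V × V* its generalized tangent space with the pairing ⟨(u,ξ),(v,η)⟩ = ξ(v) + η(u). If L and R are Lagrangian subspaces of 𝕋V, then their tangent product L ⋆ R := {(u, ξ+η) : (u,ξ) ∈ L, (u,η) ∈ R} is a Lagrangian subspace of 𝕋V. -/

import Mathlib

open Module

variable {V W : Type*} [AddCommGroup V] [Module ℝ V] [AddCommGroup W] [Module ℝ W]

/-- The canonical symmetric pairing on the generalized tangent space `𝕋V = V × V*`:
`⟨(u,ξ),(v,η)⟩ = ξ(v) + η(u)`. -/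
noncomputable def gpair : (V × Module.Dual ℝ V) →ₗ[ℝ] (V × Module.Dual ℝ V) →ₗ[ℝ] ℝ :=
  LinearMap.mk₂ ℝ (fun a b => a.2 b.1 + b.2 a.1)
    (fun a a' b => by
      simp only [Prod.fst_add, Prod.snd_add, LinearMap.add_apply, map_add]; ring)
    (fun r a b => by
      simp only [Prod.smul_fst, Prod.smul_snd, LinearMap.smul_apply, map_smul,
        smul_eq_mul]; ring)
    (fun a b b' => by
      simp only [Prod.fst_add, Prod.snd_add, LinearMap.add_apply, map_add]; ring)
    (fun r a b => by
      simp only [Prod.smul_fst, Prod.smul_snd, LinearMap.smul_apply, map_smul,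
        smul_eq_mul]; ring)

/-- Orthogonal complement with respect to the canonical pairing on `𝕋V`. -/
noncomputable def gperp (S : Submodule ℝ (V × Module.Dual ℝ V)) :
    Submodule ℝ (V × Module.Dual ℝ V) where
  carrier := {a | ∀ b ∈ S, gpair a b = 0}
  add_mem' := by
    intro a b ha hb c hc
    rw [map_add, LinearMap.add_apply, ha c hc, hb c hc, add_zero]
  zero_mem' := by
    intro c hc
    rw [map_zero, LinearMap.zero_apply]
  smul_mem' := by
    intro r a ha c hc
    rw [map_smul, LinearMap.smul_apply, ha c hc, smul_zero]

/-- A subspace of `𝕋V` is Lagrangian if it equals its own orthogonal complement. -/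
def IsLagrangian (L : Submodule ℝ (V × Module.Dual ℝ V)) : Prop :=
  gperp L = L

/-- A linear map `π : V* → V` is skew-symmetric. -/
def IsSkew (π : Module.Dual ℝ V →ₗ[ℝ] V) : Prop :=
  ∀ ξ η : Module.Dual ℝ V, η (π ξ) = -(ξ (π η))

/-- The tangent product `L ⋆ R = {(u, ξ+η) : (u,ξ) ∈ L, (u,η) ∈ R}`. -/
def tanProd (L R : Submodule ℝ (V × Module.Dual ℝ V)) :
    Submodule ℝ (V × Module.Dual ℝ V) where
  carrier := {a | ∃ ξ η : Module.Dual ℝ V, (a.1, ξ) ∈ L ∧ (a.1, η) ∈ R ∧ a.2 = ξ + η}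
  add_mem' := by
    rintro a b ⟨ξ, η, h1, h2, h3⟩ ⟨ξ', η', h1', h2', h3'⟩
    refine ⟨ξ + ξ', η + η', ?_, ?_, ?_⟩
    · simpa [Prod.fst_add] using L.add_mem h1 h1'
    · simpa [Prod.fst_add] using R.add_mem h2 h2'
    · simp only [Prod.snd_add, h3, h3']; abel
  zero_mem' := ⟨0, 0, by convert L.zero_mem using 1 <;> simp, by convert R.zero_mem using 1 <;> simp, by simp⟩
  smul_mem' := by
    rintro r a ⟨ξ, η, h1, h2, h3⟩
    refine ⟨r • ξ, r • η, ?_, ?_, ?_⟩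
    · simpa [Prod.smul_fst] using L.smul_mem r h1
    · simpa [Prod.smul_fst] using R.smul_mem r h2
    · simp only [Prod.smul_snd, h3, smul_add]

/-- The cotangent product `L ⊛ R = {(u+v, ξ) : (u,ξ) ∈ L, (v,ξ) ∈ R}`. -/
def cotProd (L R : Submodule ℝ (V × Module.Dual ℝ V)) :
    Submodule ℝ (V × Module.Dual ℝ V) where
  carrier := {a | ∃ u v : V, (u, a.2) ∈ L ∧ (v, a.2) ∈ R ∧ a.1 = u + v}
  add_mem' := by
    rintro a b ⟨u, v, h1, h2, h3⟩ ⟨u', v', h1', h2', h3'⟩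
    refine ⟨u + u', v + v', ?_, ?_, ?_⟩
    · simpa [Prod.snd_add] using L.add_mem h1 h1'
    · simpa [Prod.snd_add] using R.add_mem h2 h2'
    · simp only [Prod.fst_add, h3, h3']; abel
  zero_mem' := ⟨0, 0, by convert L.zero_mem using 1 <;> simp, by convert R.zero_mem using 1 <;> simp, by simp⟩
  smul_mem' := by
    rintro r a ⟨u, v, h1, h2, h3⟩
    refine ⟨r • u, r • v, ?_, ?_, ?_⟩
    · simpa [Prod.smul_snd] using L.smul_mem r h1
    · simpa [Prod.smul_snd] using R.smul_mem r h2
    · simp only [Prod.smul_fst, h3, smul_add]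

/-- The backward image `φ^!(L) = {(u, η ∘ φ) : (φ(u), η) ∈ L}`. -/
def back (φ : V →ₗ[ℝ] W) (L : Submodule ℝ (W × Module.Dual ℝ W)) :
    Submodule ℝ (V × Module.Dual ℝ V) where
  carrier := {a | ∃ η : Module.Dual ℝ W, (φ a.1, η) ∈ L ∧ a.2 = η.comp φ}
  add_mem' := by
    rintro a b ⟨η, h1, h2⟩ ⟨η', h1', h2'⟩
    refine ⟨η + η', ?_, ?_⟩
    · simpa [Prod.fst_add, map_add] using L.add_mem h1 h1'
    · simp only [Prod.snd_add, h2, h2', LinearMap.add_comp]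
  zero_mem' := ⟨0, by convert L.zero_mem using 1 <;> simp, by simp⟩
  smul_mem' := by
    rintro r a ⟨η, h1, h2⟩
    refine ⟨r • η, ?_, ?_⟩
    · simpa [Prod.smul_fst, map_smul] using L.smul_mem r h1
    · simp only [Prod.smul_snd, h2, LinearMap.smul_comp]

/-- The forward image `φ_!(L) = {(φ(u), η) : (u, η ∘ φ) ∈ L}`. -/
def fwd (φ : V →ₗ[ℝ] W) (L : Submodule ℝ (V × Module.Dual ℝ V)) :
    Submodule ℝ (W × Module.Dual ℝ W) where
  carrier := {b | ∃ u : V, φ u = b.1 ∧ (u, b.2.comp φ) ∈ L}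
  add_mem' := by
    rintro a b ⟨u, h1, h2⟩ ⟨u', h1', h2'⟩
    refine ⟨u + u', ?_, ?_⟩
    · simp only [map_add, h1, h1', Prod.fst_add]
    · have := L.add_mem h2 h2'
      simpa [Prod.snd_add, LinearMap.add_comp] using this
  zero_mem' := ⟨0, by simp, by convert L.zero_mem using 1 <;> simp⟩
  smul_mem' := by
    rintro r a ⟨u, h1, h2⟩
    refine ⟨r • u, ?_, ?_⟩
    · simp only [map_smul, h1, Prod.smul_fst]
    · have := L.smul_mem r h2
      simpa [Prod.smul_snd, LinearMap.smul_comp] using this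

/-- The graph `Gr(π) = {(π(ξ), ξ) : ξ ∈ V*}` of a map `π : V* → V`. -/
def gr (π : Module.Dual ℝ V →ₗ[ℝ] V) : Submodule ℝ (V × Module.Dual ℝ V) where
  carrier := {a | π a.2 = a.1}
  add_mem' := by
    intro a b ha hb
    simp only [Set.mem_setOf_eq, Prod.fst_add, Prod.snd_add, map_add] at *
    rw [ha, hb]
  zero_mem' := by simp
  smul_mem' := by
    intro r a ha
    simp only [Set.mem_setOf_eq, Prod.smul_fst, Prod.smul_snd, map_smul] at *
    rw [ha]


section Aux

variable {V : Type*} [AddCommGroup V] [Module ℝ V]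

lemma gpair_apply (a b : V × Module.Dual ℝ V) : gpair a b = a.2 b.1 + b.2 a.1 := rfl

lemma isotropic_of_lagrangian {L : Submodule ℝ (V × Module.Dual ℝ V)}
    (hL : IsLagrangian L) {a b : V × Module.Dual ℝ V} (ha : a ∈ L) (hb : b ∈ L) :
    gpair a b = 0 := by
  rw [← hL] at ha
  exact ha b hb

lemma mem_vert_iff {L : Submodule ℝ (V × Module.Dual ℝ V)} (hL : IsLagrangian L)
    (ξ : Module.Dual ℝ V) :
    ((0 : V), ξ) ∈ L ↔ ξ ∈ (L.map (LinearMap.fst ℝ V (Module.Dual ℝ V))).dualAnnihilator := by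
  constructor
  · intro h
    rw [Submodule.mem_dualAnnihilator]
    rintro u ⟨⟨u', η⟩, hm, rfl⟩
    have := isotropic_of_lagrangian hL h hm
    simpa [gpair_apply] using this
  · intro h
    rw [Submodule.mem_dualAnnihilator] at h
    rw [← hL]
    rintro ⟨u, η⟩ hm
    have : ξ u = 0 := h u ⟨(u, η), hm, rfl⟩
    simp [gpair_apply, this]

end Aux

theorem stmt1 [FiniteDimensional ℝ V]
    (L R : Submodule ℝ (V × Module.Dual ℝ V))
    (hL : IsLagrangian L) (hR : IsLagrangian R) :
    IsLagrangian (tanProd L R) := by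
  unfold IsLagrangian
  apply le_antisymm
  · -- coisotropic direction: gperp (L ⋆ R) ⊆ L ⋆ R
    rintro ⟨v, ζ⟩ hv
    have hperp : ∀ b ∈ tanProd L R, gpair (v, ζ) b = 0 := hv
    set PL := L.map (LinearMap.fst ℝ V (Module.Dual ℝ V)) with hPL
    set PR := R.map (LinearMap.fst ℝ V (Module.Dual ℝ V)) with hPR
    -- v belongs to the projection of L
    have hvL : v ∈ PL := by
      rw [← Subspace.dualAnnihilator_dualCoannihilator_eq (W := PL)]
      rw [Submodule.mem_dualCoannihilator]
      intro ξ hξ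
      have h0 : ((0 : V), ξ) ∈ L := (mem_vert_iff hL ξ).2 hξ
      have hmem : ((0 : V), ξ) ∈ tanProd L R :=
        ⟨ξ, 0, h0, R.zero_mem, by simp⟩
      have := hperp _ hmem
      simpa [gpair_apply] using this
    have hvR : v ∈ PR := by
      rw [← Subspace.dualAnnihilator_dualCoannihilator_eq (W := PR)]
      rw [Submodule.mem_dualCoannihilator]
      intro η hη
      have h0 : ((0 : V), η) ∈ R := (mem_vert_iff hR η).2 hη
      have hmem : ((0 : V), η) ∈ tanProd L R :=
        ⟨0, η, L.zero_mem, h0, by simp⟩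
      have := hperp _ hmem
      simpa [gpair_apply] using this
    obtain ⟨⟨v1, ξ₀⟩, hξ₀, (h1 : v1 = v)⟩ := hvL
    subst h1
    obtain ⟨⟨v2, η₀⟩, hη₀m, (h2 : v2 = v1)⟩ := hvR
    subst h2
    -- the defect annihilates PL ⊓ PR
    have hδ : ζ - ξ₀ - η₀ ∈ (PL ⊓ PR).dualAnnihilator := by
      rw [Submodule.mem_dualAnnihilator]
      rintro u ⟨⟨⟨u1, ξ⟩, hξm, (e1 : u1 = u)⟩, ⟨⟨u2, η⟩, hηm, (e2 : u2 = u)⟩⟩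
      subst e1; subst e2
      have hmem : ((u2 : V), ξ + η) ∈ tanProd L R := ⟨ξ, η, hξm, hηm, rfl⟩
      have h1 := hperp _ hmem
      have h2 := isotropic_of_lagrangian hL hξm hξ₀
      have h3 := isotropic_of_lagrangian hR hηm hη₀m
      simp only [gpair_apply, LinearMap.add_apply] at h1 h2 h3
      simp only [LinearMap.sub_apply]
      linarith
    rw [Subspace.dualAnnihilator_inf_eq, Submodule.mem_sup] at hδ
    obtain ⟨ξ₁, hξ₁, η₁, hη₁, hsum⟩ := hδ
    have hξ₁L : ((0 : V), ξ₁) ∈ L := (mem_vert_iff hL ξ₁).2 hξ₁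
    have hη₁R : ((0 : V), η₁) ∈ R := (mem_vert_iff hR η₁).2 hη₁
    refine ⟨ξ₀ + ξ₁, η₀ + η₁, ?_, ?_, ?_⟩
    · have := L.add_mem hξ₀ hξ₁L
      simpa using this
    · have := R.add_mem hη₀m hη₁R
      simpa using this
    · have : ζ = ξ₀ + η₀ + (ξ₁ + η₁) := by
        have := hsum
        rw [show ξ₁ + η₁ = ζ - ξ₀ - η₀ from this]
        abel
      rw [this]; abel
  · -- isotropic direction: L ⋆ R ⊆ gperp (L ⋆ R)
    rintro ⟨u, _⟩ ⟨ξ, η, hξ, hη, rfl⟩ ⟨u', _⟩ ⟨ξ', η', hξ', hη', rfl⟩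
    have h1 := isotropic_of_lagrangian hL hξ hξ'
    have h2 := isotropic_of_lagrangian hR hη hη'
    simp only [gpair_apply, LinearMap.add_apply] at h1 h2 ⊢
    linarith
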